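/- Let X ~ USh(ω,η) with ω > 0, η > 0. Then E[X²] = (ω/(ω+3η))·[ω/(2+ω) + η/(1+ω) + 2ωη/(1+ω)^2]. -/

import Mathlib

open Real MeasureTheory intervalIntegral Set

lemma log_rpow_intervalIntegrable {r : ℝ} (hr : -1 < r) :
    IntervalIntegrable (fun x => Real.log x * x ^ r) volume 0 1 := by
  set t : ℝ := (r + 1) / 2 with ht
  have ht0 : 0 < t := by rw [ht]; linarith
  have hrt : -1 < r - t := by simp only [ht]; linarith
  have hdom : IntervalIntegrable (fun x : ℝ => (1 / t) * x ^ (r - t)) volume 0 1 :=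
    (intervalIntegrable_rpow' hrt).const_mul _
  refine hdom.mono_fun ?_ ?_
  · apply Measurable.aestronglyMeasurable
    exact Real.measurable_log.mul (measurable_id.pow_const r)
  · filter_upwards [ae_restrict_mem measurableSet_Ioc] with x hx
    rw [uIoc_of_le (by norm_num : (0:ℝ) ≤ 1)] at hx
    obtain ⟨hx0, hx1⟩ := hx
    have hxr : x ^ r = x ^ t * x ^ (r - t) := by
      rw [← Real.rpow_add hx0]; ring_nf
    rw [Real.norm_eq_abs, Real.norm_eq_abs, hxr, ← mul_assoc, abs_mul]
    have h1 : |Real.log x * x ^ t| < 1 / t :=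
      Real.abs_log_mul_self_rpow_lt x t hx0 hx1 ht0
    have h2 : |x ^ (r - t)| = x ^ (r - t) := abs_of_nonneg (Real.rpow_nonneg hx0.le _)
    rw [h2, abs_of_nonneg (by positivity : (0:ℝ) ≤ 1 / t * x ^ (r - t))]
    exact mul_le_mul_of_nonneg_right h1.le (Real.rpow_nonneg hx0.le _)

lemma integral_log_mul_rpow {r : ℝ} (hr : -1 < r) :
    ∫ x in (0:ℝ)..1, Real.log x * x ^ r = -(1 / (r + 1) ^ 2) := by
  have hr1 : (0:ℝ) < r + 1 := by linarith
  set F : ℝ → ℝ := fun x => x ^ (r + 1) * ((r + 1) * Real.log x - 1) / (r + 1) ^ 2 with hF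
  have hderiv : ∀ x ∈ Ioo (0:ℝ) 1, HasDerivAt F (Real.log x * x ^ r) x := by
    intro x hx
    have hx0 : 0 < x := hx.1
    have h1 : HasDerivAt (fun y : ℝ => y ^ (r + 1)) ((r + 1) * x ^ r) x := by
      simpa using Real.hasDerivAt_rpow_const (p := r + 1) (Or.inl hx0.ne')
    have h2 : HasDerivAt (fun y : ℝ => (r + 1) * Real.log y - 1) ((r + 1) / x) x := by
      simpa [mul_div_assoc, div_eq_mul_inv] using ((Real.hasDerivAt_log hx0.ne').const_mul (r + 1)).sub_const 1
    have h3 := (h1.mul h2).div_const ((r + 1) ^ 2)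
    refine h3.congr_deriv ?_
    symm
    rw [eq_div_iff (by positivity : ((r+1)^2 : ℝ) ≠ 0), Real.rpow_add_one hx0.ne']
    field_simp
    ring
  have ha : Filter.Tendsto F (nhdsWithin 0 (Ioi 0)) (nhds 0) := by
    have h1 : Filter.Tendsto (fun x : ℝ => Real.log x * x ^ (r + 1)) (nhdsWithin 0 (Ioi 0)) (nhds 0) :=
      tendsto_log_mul_rpow_nhdsGT_zero hr1
    have h2 : Filter.Tendsto (fun x : ℝ => x ^ (r + 1)) (nhdsWithin 0 (Ioi 0)) (nhds 0) := by
      have h2' : Filter.Tendsto (fun x : ℝ => x ^ (r + 1)) (nhdsWithin 0 (Ioi 0)) (nhds ((0:ℝ) ^ (r+1))) :=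
        (Real.continuousAt_rpow_const 0 (r+1) (Or.inr hr1.le)).tendsto.mono_left nhdsWithin_le_nhds
      rwa [Real.zero_rpow hr1.ne'] at h2'
    have : Filter.Tendsto (fun x : ℝ => ((r+1) * (Real.log x * x ^ (r+1)) - x ^ (r+1)) / (r+1)^2)
        (nhdsWithin 0 (Ioi 0)) (nhds 0) := by
      have := ((h1.const_mul (r+1)).sub h2).div_const ((r+1)^2)
      simpa using this
    refine this.congr (fun x => ?_)
    simp only [hF]; ring
  have hb : Filter.Tendsto F (nhdsWithin 1 (Iio 1)) (nhds (-(1 / (r + 1) ^ 2))) := by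
    have hc : ContinuousAt F 1 := by
      apply ContinuousAt.div_const
      apply ContinuousAt.mul
      · exact (Real.continuousAt_rpow_const 1 (r+1) (Or.inl one_ne_zero))
      · exact ((Real.continuousAt_log one_ne_zero).const_mul _).sub continuousAt_const
    have : F 1 = -(1 / (r + 1) ^ 2) := by
      simp [hF, Real.one_rpow]
      ring
    rw [← this]
    exact hc.continuousWithinAt
  have := integral_eq_sub_of_hasDerivAt_of_tendsto (by norm_num : (0:ℝ) < 1)
    hderiv (log_rpow_intervalIntegrable hr) ha hb
  simpa using this

theorem ush_second_moment (ω η : ℝ) (hω : 0 < ω) (hη : 0 < η) :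
    ∫ x in (0:ℝ)..1, x ^ 2 *
      (ω / (ω + 3*η) * (ω * x ^ (ω-1) + (2*η - 8*ω*η*Real.log x) * x ^ (2*ω-1)))
    = ω / (ω + 3*η) * (ω / (2 + ω) + η / (1 + ω) + 2*ω*η / (1 + ω) ^ 2) := by
  set c : ℝ := ω / (ω + 3*η) with hc
  have hω1 : (-1:ℝ) < ω + 1 := by linarith
  have h2ω1 : (-1:ℝ) < 2*ω + 1 := by linarith
  have key : ∀ x ∈ Set.uIcc (0:ℝ) 1,
      x ^ 2 * (c * (ω * x ^ (ω-1) + (2*η - 8*ω*η*Real.log x) * x ^ (2*ω-1)))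
      = c * ω * x ^ (ω+1) + c * (2*η) * x ^ (2*ω+1)
        + (-(c * (8*ω*η))) * (Real.log x * x ^ (2*ω+1)) := by
    intro x hx
    rw [Set.uIcc_of_le (by norm_num : (0:ℝ) ≤ 1)] at hx
    rcases eq_or_lt_of_le hx.1 with h0 | h0
    · subst h0
      rw [Real.zero_rpow (by linarith : ω + 1 ≠ 0), Real.zero_rpow (by linarith : 2*ω + 1 ≠ 0)]
      norm_num
    · have e1 : x ^ (ω+1) = x ^ (ω-1) * x ^ 2 := by
        rw [← Real.rpow_natCast x 2, ← Real.rpow_add h0]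
        congr 1; push_cast; ring
      have e2 : x ^ (2*ω+1) = x ^ (2*ω-1) * x ^ 2 := by
        rw [← Real.rpow_natCast x 2, ← Real.rpow_add h0]
        congr 1; push_cast; ring
      rw [e1, e2]
      ring
  rw [intervalIntegral.integral_congr key]
  have i1 : IntervalIntegrable (fun x : ℝ => c * ω * x ^ (ω+1)) volume 0 1 :=
    (intervalIntegrable_rpow' hω1).const_mul _
  have i2 : IntervalIntegrable (fun x : ℝ => c * (2*η) * x ^ (2*ω+1)) volume 0 1 :=
    (intervalIntegrable_rpow' h2ω1).const_mul _
  have i3 : IntervalIntegrable (fun x : ℝ => (-(c * (8*ω*η))) * (Real.log x * x ^ (2*ω+1)))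
      volume 0 1 := (log_rpow_intervalIntegrable h2ω1).const_mul _
  rw [intervalIntegral.integral_add (i1.add i2) i3, intervalIntegral.integral_add i1 i2]
  rw [intervalIntegral.integral_const_mul, intervalIntegral.integral_const_mul,
    intervalIntegral.integral_const_mul]
  rw [integral_rpow (Or.inl hω1), integral_rpow (Or.inl h2ω1), integral_log_mul_rpow h2ω1]
  rw [Real.one_rpow, Real.one_rpow, Real.zero_rpow (by linarith : ω + 1 + 1 ≠ 0),
    Real.zero_rpow (by linarith : 2*ω + 1 + 1 ≠ 0)]
  have h1 : (1:ℝ) + ω ≠ 0 := by linarith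
  have h2 : (2:ℝ) + ω ≠ 0 := by linarith
  field_simp
  ring
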